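/- Let R be a commutative ring of characteristic p, let B be a b×b matrix and C a c×c matrix over the p-typical Witt vectors W(R), and suppose that the product of Frobenius twists C₀^(p^{e-1}) ⋯ C₀^(p) · C₀ of the zeroth Witt component C₀ of C vanishes for some positive integer e. Then the only b×c matrix X over W(R) satisfying both V(X) = F^{e-1}(B) · X · F^{e-1}(C) and F(X) = 0 is X = 0, where F and V denote the Witt vector Frobenius and Verschiebung applied entrywise. -/
import Mathlib

/-- The Witt vector Frobenius as a plain function. -/
noncomputable def Fr (p : ℕ) [Fact p.Prime] {R : Type} [CommRing R] :
    WittVector p R → WittVector p R :=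
  ⇑(WittVector.frobenius : WittVector p R →+* WittVector p R)

/-- The Witt vector Verschiebung as a plain function. -/
noncomputable def Ve (p : ℕ) [Fact p.Prime] {R : Type} [CommRing R] :
    WittVector p R → WittVector p R :=
  ⇑(WittVector.verschiebung : WittVector p R →+ WittVector p R)

section Aux

variable {p : ℕ} [Fact p.Prime] {R : Type} [CommRing R]

lemma ghost0_eq_coeff (x : WittVector p R) :
    WittVector.ghostComponent 0 x = x.coeff 0 := by
  simp [WittVector.ghostComponent_apply, wittPolynomial_zero]

lemma ve_inj {x y : WittVector p R} (h : Ve p x = Ve p y) : x = y := by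
  ext n
  have := congrArg (fun z : WittVector p R => z.coeff (n + 1)) h
  simpa [Ve, WittVector.verschiebung_coeff_succ] using this

lemma exists_ver {x : WittVector p R} (h : x.coeff 0 = 0) :
    ∃ w : WittVector p R, WittVector.verschiebung w = x := by
  refine ⟨WittVector.mk p fun n => x.coeff (n + 1), ?_⟩
  ext n
  cases n with
  | zero => simpa [WittVector.verschiebung_coeff_zero] using h.symm
  | succ n => simp [WittVector.verschiebung_coeff_succ, WittVector.coeff_mk]

lemma mul_ver_zero {x m : WittVector p R} (hx : WittVector.frobenius x = 0)
    (hm : m.coeff 0 = 0) : x * m = 0 := by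
  obtain ⟨w, rfl⟩ := exists_ver hm
  rw [mul_comm, ← WittVector.verschiebung_mul_frobenius, hx, mul_zero, map_zero]

lemma mul_congr_coeff0 {x m m' : WittVector p R} (hx : WittVector.frobenius x = 0)
    (h : m.coeff 0 = m'.coeff 0) : x * m = x * m' := by
  have h0 : (m - m').coeff 0 = 0 := by
    have := map_sub (WittVector.ghostComponent (p := p) (R := R) 0) m m'
    rw [ghost0_eq_coeff, ghost0_eq_coeff, ghost0_eq_coeff] at this
    rw [this, h, sub_self]
  have h1 : x * (m - m') = 0 := mul_ver_zero hx h0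
  rw [mul_sub] at h1
  exact sub_eq_zero.mp h1

variable [CharP R p]

lemma frob_teich (a : R) :
    WittVector.frobenius (WittVector.teichmuller p a) =
      WittVector.teichmuller p (a ^ p) := by
  have hp : p ≠ 0 := (Fact.out : p.Prime).ne_zero
  ext n
  rw [WittVector.coeff_frobenius_charP]
  cases n with
  | zero =>
      rw [WittVector.teichmuller_coeff_zero, WittVector.teichmuller_coeff_zero]
  | succ n =>
      rw [WittVector.teichmuller_coeff_pos p a (n + 1) n.succ_pos,
        WittVector.teichmuller_coeff_pos p (a ^ p) (n + 1) n.succ_pos, zero_pow hp]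

lemma ve_mul_teich (x : WittVector p R) (a : R) :
    Ve p (x * WittVector.teichmuller p (a ^ p)) =
      Ve p x * WittVector.teichmuller p a := by
  show WittVector.verschiebung _ = WittVector.verschiebung x * _
  rw [← frob_teich, WittVector.verschiebung_mul_frobenius]

lemma fr_iter_coeff_zero (m : ℕ) (x : WittVector p R) :
    ((Fr p)^[m] x).coeff 0 = x.coeff 0 ^ p ^ m := by
  have : (Fr p)^[m] x = (WittVector.frobenius)^[m] x := rfl
  rw [this, WittVector.iterate_frobenius_coeff]

end Aux

theorem statement_0 (p : ℕ) [Fact p.Prime] (R : Type) [CommRing R] [CharP R p]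
    (b c e : ℕ) (he : 0 < e)
    (B : Matrix (Fin b) (Fin b) (WittVector p R))
    (C : Matrix (Fin c) (Fin c) (WittVector p R))
    (hC : (List.ofFn fun i : Fin e =>
        C.map fun x => (x.coeff 0) ^ p ^ (e - 1 - (i : ℕ))).prod = 0)
    (X : Matrix (Fin b) (Fin c) (WittVector p R))
    (h1 : X.map (Ve p) = (B.map ((Fr p)^[e - 1])) * X * (C.map ((Fr p)^[e - 1])))
    (h2 : X.map (Fr p) = 0) :
    X = 0 := by
  classical
  set tt : R → WittVector p R := fun a => WittVector.teichmuller p a with htt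
  have hXF : ∀ i l, WittVector.frobenius (X i l) = 0 := by
    intro i l
    have : X.map (Fr p) i l = (0 : Matrix (Fin b) (Fin c) (WittVector p R)) i l := by
      rw [h2]
    simpa [Matrix.map_apply, Fr] using this
  set Npow : ℕ → Matrix (Fin c) (Fin c) R :=
    fun m => C.map fun x => x.coeff 0 ^ p ^ m with hNpow
  -- the key step
  have step : ∀ A : Matrix (Fin c) (Fin c) R,
      X * (Npow (e - 1) * A).map tt = 0 →
      X * (A.map fun r => r ^ p).map tt = 0 := by
    intro A hA
    have key : X * (C.map ((Fr p)^[e - 1]) * A.map tt) = 0 := by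
      have : X * (C.map ((Fr p)^[e - 1]) * A.map tt)
          = X * (Npow (e - 1) * A).map tt := by
        refine Matrix.ext fun i j => ?_
        rw [Matrix.mul_apply, Matrix.mul_apply]
        refine Finset.sum_congr rfl fun l _ => ?_
        refine mul_congr_coeff0 (hXF i l) ?_
        -- coefficient-0 computation
        have lhs : ((C.map ((Fr p)^[e - 1]) * A.map tt) l j).coeff 0
            = ∑ m : Fin c, (C l m).coeff 0 ^ p ^ (e - 1) * A m j := by
          rw [← ghost0_eq_coeff, Matrix.mul_apply,
            map_sum (WittVector.ghostComponent (p := p) (R := R) 0)]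
          refine Finset.sum_congr rfl fun m _ => ?_
          rw [map_mul, ghost0_eq_coeff, ghost0_eq_coeff, Matrix.map_apply,
            Matrix.map_apply, fr_iter_coeff_zero, htt,
            WittVector.teichmuller_coeff_zero]
        have rhs : (((Npow (e - 1) * A).map tt) l j).coeff 0
            = ∑ m : Fin c, (C l m).coeff 0 ^ p ^ (e - 1) * A m j := by
          rw [Matrix.map_apply, htt, WittVector.teichmuller_coeff_zero,
            Matrix.mul_apply]
          refine Finset.sum_congr rfl fun m _ => ?_
          rfl
        rw [lhs, rhs]
      rw [this, hA]
    have hV : ∀ i j, Ve p ((X * (A.map fun r => r ^ p).map tt) i j) = 0 := by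
      intro i j
      rw [Matrix.mul_apply]
      have expand : Ve p (∑ k, X i k * ((A.map fun r => r ^ p).map tt) k j)
          = ∑ k, Ve p (X i k) * tt (A k j) := by
        rw [show Ve p = ⇑(WittVector.verschiebung :
          WittVector p R →+ WittVector p R) from rfl,
          map_sum (WittVector.verschiebung : WittVector p R →+ WittVector p R)]
        refine Finset.sum_congr rfl fun k _ => ?_
        rw [Matrix.map_apply, Matrix.map_apply]
        exact ve_mul_teich (X i k) (A k j)
      rw [expand]
      have : ∑ k, Ve p (X i k) * tt (A k j)
          = ((X.map (Ve p)) * A.map tt) i j := by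
        rw [Matrix.mul_apply]
        refine Finset.sum_congr rfl fun k _ => ?_
        rw [Matrix.map_apply, Matrix.map_apply]
      rw [this, h1, Matrix.mul_assoc, Matrix.mul_assoc, key, Matrix.mul_zero, Matrix.zero_apply]
    refine Matrix.ext fun i j => ve_inj ?_
    rw [hV i j, Matrix.zero_apply, Ve, map_zero]
  -- the descending products
  set N : ℕ → Matrix (Fin c) (Fin c) R :=
    fun j => (List.ofFn fun i : Fin j => Npow (e - 1 - (i : ℕ))).prod with hN
  have hNe : N e = 0 := hC
  have hstep' : ∀ j, j + 1 ≤ e → X * (N (j + 1)).map tt = 0 → X * (N j).map tt = 0 := by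
    intro j hj h
    set M : Matrix (Fin c) (Fin c) R :=
      (List.ofFn fun i : Fin j => Npow (e - 1 - ((i : ℕ) + 1))).prod with hM
    have hsplit : N (j + 1) = Npow (e - 1) * M := by
      show (List.ofFn fun i : Fin (j + 1) => Npow (e - 1 - (i : ℕ))).prod = Npow (e - 1) * M
      rw [List.ofFn_succ, List.prod_cons]
      congr 1
    have hMp : M.map (fun r => r ^ p) = N j := by
      have hfr : ∀ (Z : Matrix (Fin c) (Fin c) R),
          Z.map (fun r => r ^ p) = (frobenius R p).mapMatrix Z := by
        intro Z
        ext i' j'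
        simp [Matrix.map_apply, frobenius_def]
      have hfun : (⇑(frobenius R p).mapMatrix ∘ fun i : Fin j => Npow (e - 1 - ((i : ℕ) + 1)))
          = fun i : Fin j => Npow (e - 1 - (i : ℕ)) := by
        funext i
        show (frobenius R p).mapMatrix (Npow (e - 1 - ((i : ℕ) + 1))) = Npow (e - 1 - (i : ℕ))
        rw [← hfr, hNpow]
        ext i' j'
        simp only [Matrix.map_apply]
        rw [← pow_mul, ← pow_succ]
        have hlt : (i : ℕ) < j := i.isLt
        have hexp : e - 1 - ((i : ℕ) + 1) + 1 = e - 1 - (i : ℕ) := by omega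
        rw [hexp]
      rw [hfr, hM, map_list_prod, List.map_ofFn, hfun]
    rw [← hMp]
    exact step M (by rw [← hsplit]; exact h)
  have main : ∀ k, k ≤ e → X * (N (e - k)).map tt = 0 := by
    intro k
    induction k with
    | zero =>
        intro _
        have h0 : (N (e - 0)).map tt = 0 := by
          rw [Nat.sub_zero, hNe]
          ext i j
          simp [Matrix.map_apply, htt]
        rw [h0, Matrix.mul_zero]
    | succ k ih =>
        intro hk
        have prev := ih (Nat.le_of_succ_le hk)
        have heq : e - k = (e - (k + 1)) + 1 := by omega
        apply hstep' (e - (k + 1)) (by omega)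
        rw [← heq]
        exact prev
  have hfin := main e le_rfl
  have hN0 : (N (e - e)).map tt = 1 := by
    rw [Nat.sub_self, hN]
    show ((List.ofFn fun i : Fin 0 => Npow (e - 1 - (i : ℕ))).prod).map tt = 1
    rw [List.ofFn_zero, List.prod_nil]
    ext i j
    by_cases hij : i = j <;>
      simp [Matrix.map_apply, Matrix.one_apply, hij, htt]
  rw [hN0, Matrix.mul_one] at hfin
  exact hfin
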